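/- Let V ∈ ℕ, c > 0, and for each i ∈ {1,…,V} let A_i ∈ ℝ^{m×n_i}, F_i : ℝ^{n_i} → ℝ and G : ℝ^m → ℝ be differentiable. Define L_c({p_i},{ν_i},q) = Σ_{i=1}^V [F_i(p_i) + ⟨ν_i, A_i p_i − q⟩ + (c/2)‖A_i p_i − q‖²] + G(q). Suppose (p_i, ν_i, q) satisfies ∇F_i(p_i) = −A_iᵀν_i for all i, and ∇G(q) = Σ_{i=1}^V [ν_i + c(A_i p_i − q)]. Then the gradient of L_c at this point has blocks ∇_{p_i} L_c = cA_iᵀ(A_i p_i − q), ∇_{ν_i} L_c = A_i p_i − q, and ∇_q L_c = 0, and consequently ‖∇L_c‖² ≥ Σ_{i=1}^V (c² μ_{A_iA_iᵀ} + 1)‖A_i p_i − q‖², where μ_{A_iA_iᵀ} is the smallest singular value of A_iA_iᵀ and ‖·‖ is the Euclidean norm. -/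

import Mathlib

open Matrix RealInnerProductSpace

section Helpers

open InnerProductSpace

variable {E G' : Type*} [NormedAddCommGroup E] [InnerProductSpace ℝ E] [CompleteSpace E]
  [NormedAddCommGroup G'] [InnerProductSpace ℝ G'] [CompleteSpace G']

lemma hga_add {f g : E → ℝ} {f' g' : E} {x : E} (hf : HasGradientAt f f' x)
    (hg : HasGradientAt g g' x) : HasGradientAt (fun y => f y + g y) (f' + g') x := by
  have h := hf.hasFDerivAt.add hg.hasFDerivAt
  rw [hasGradientAt_iff_hasFDerivAt, map_add]; exact h

lemma hga_sum {ι : Type*} (s : Finset ι) {f : ι → E → ℝ} {f' : ι → E} {x : E}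
    (hf : ∀ i ∈ s, HasGradientAt (f i) (f' i) x) :
    HasGradientAt (fun y => ∑ i ∈ s, f i y) (∑ i ∈ s, f' i) x := by
  have h := HasFDerivAt.fun_sum (fun i hi => (hf i hi).hasFDerivAt)
  rw [hasGradientAt_iff_hasFDerivAt, map_sum]; exact h

lemma hga_const_mul {f : E → ℝ} {f' : E} {x : E} (a : ℝ) (hf : HasGradientAt f f' x) :
    HasGradientAt (fun y => a * f y) (a • f') x := by
  have h := hf.hasFDerivAt.const_mul a
  rw [hasGradientAt_iff_hasFDerivAt, _root_.map_smul]; exact h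

lemma hga_inner_right (v x : E) : HasGradientAt (fun y => ⟪v, y⟫) v x :=
  (InnerProductSpace.toDual ℝ E v).hasFDerivAt

lemma hga_inner_left (v x : E) : HasGradientAt (fun y => ⟪y, v⟫) v x := by
  simp_rw [real_inner_comm]; exact hga_inner_right v x

lemma hga_normsq (x : E) : HasGradientAt (fun y : E => ‖y‖ ^ 2) ((2:ℝ) • x) x := by
  have h := (hasFDerivAt_id x).inner ℝ (hasFDerivAt_id x)
  rw [hasGradientAt_iff_hasFDerivAt]
  have he : (InnerProductSpace.toDual ℝ E ((2:ℝ) • x) : E →L[ℝ] ℝ)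
      = (fderivInnerCLM ℝ (x, x)).comp
        ((ContinuousLinearMap.id ℝ E).prod (ContinuousLinearMap.id ℝ E)) := by
    ext y
    simp [fderivInnerCLM_apply, real_inner_smul_left, real_inner_comm]
    ring
  rw [he]
  have : (fun y : E => ‖y‖ ^ 2) = fun y : E => ⟪y, y⟫ := by
    funext y; rw [real_inner_self_eq_norm_sq]
  rw [this]
  exact h

lemma hga_phi (v : E) (c : ℝ) (u : E) :
    HasGradientAt (fun y => ⟪v, y⟫ + c / 2 * ‖y‖ ^ 2) (v + c • u) u := by
  have h := hga_add (hga_inner_right v u) (hga_const_mul (c / 2) (hga_normsq u))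
  have : v + (c / 2) • ((2:ℝ) • u) = v + c • u := by
    rw [smul_smul]; norm_num
  rwa [this] at h

lemma hga_comp_affine {g : G' → ℝ} {g' : G'} (T : E →L[ℝ] G') (q : G') {x : E} (w : E)
    (hw : ∀ y, ⟪w, y⟫ = ⟪g', T y⟫) (hg : HasGradientAt g g' (T x - q)) :
    HasGradientAt (fun y => g (T y - q)) w x := by
  have hT : HasFDerivAt (fun y => T y - q) (T : E →L[ℝ] G') x := T.hasFDerivAt.sub_const q
  have h := hg.hasFDerivAt.comp x hT
  rw [hasGradientAt_iff_hasFDerivAt]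
  have heq : (InnerProductSpace.toDual ℝ E w : E →L[ℝ] ℝ)
      = ((InnerProductSpace.toDual ℝ G' g' : G' →L[ℝ] ℝ).comp T) := by
    ext y; simp [hw y]
  rw [heq]; exact h

lemma transpose_eq_conjTranspose {m k : ℕ} (A : Matrix (Fin m) (Fin k) ℝ) : Aᵀ = Aᴴ := by
  ext i j; simp [Matrix.conjTranspose_apply]

lemma inner_toEuclideanLin_transpose {m k : ℕ} (A : Matrix (Fin m) (Fin k) ℝ)
    (z : EuclideanSpace ℝ (Fin m)) (y : EuclideanSpace ℝ (Fin k)) :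
    ⟪Matrix.toEuclideanLin Aᵀ z, y⟫ = ⟪z, Matrix.toEuclideanLin A y⟫ := by
  rw [transpose_eq_conjTranspose, Matrix.toEuclideanLin_conjTranspose_eq_adjoint,
    LinearMap.adjoint_inner_left]

end Helpers


/-- The smallest singular value of a square real matrix `B`, via its variational
characterization `μ_B = inf_{‖x‖=1} ‖Bx‖` (Euclidean norms). -/
noncomputable def minSingularValue {k : ℕ} (B : Matrix (Fin k) (Fin k) ℝ) : ℝ :=
  sInf {r : ℝ | ∃ x : EuclideanSpace ℝ (Fin k), ‖x‖ = 1 ∧ r = ‖Matrix.toEuclideanLin B x‖}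

lemma key_sv {m k : ℕ} (A : Matrix (Fin m) (Fin k) ℝ) (r : EuclideanSpace ℝ (Fin m)) :
    minSingularValue (A * Aᵀ) * ‖r‖ ^ 2 ≤ ‖Matrix.toEuclideanLin Aᵀ r‖ ^ 2 := by
  have hB : (A * Aᵀ).IsHermitian := by
    rw [transpose_eq_conjTranspose]; exact Matrix.isHermitian_mul_conjTranspose_self A
  set B := A * Aᵀ with hBdef
  set v := hB.eigenvectorBasis with hv
  set lam := hB.eigenvalues with hlam
  have hlam0 : ∀ j, 0 ≤ lam j := by
    intro j
    have hps : B.PosSemidef := by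
      rw [hBdef, transpose_eq_conjTranspose]
      exact Matrix.posSemidef_self_mul_conjTranspose A
    exact hps.eigenvalues_nonneg j
  have hBv : ∀ j, Matrix.toEuclideanLin B (v j) = lam j • v j := by
    intro j
    apply (WithLp.equiv 2 (Fin m → ℝ)).injective
    simpa using hB.mulVec_eigenvectorBasis j
  have hmem : ∀ j, lam j ∈ {t : ℝ | ∃ x : EuclideanSpace ℝ (Fin m), ‖x‖ = 1 ∧
      t = ‖Matrix.toEuclideanLin B x‖} := by
    intro j
    refine ⟨v j, v.orthonormal.1 j, ?_⟩
    rw [hBv j, norm_smul, v.orthonormal.1 j, mul_one, Real.norm_eq_abs,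
      abs_of_nonneg (hlam0 j)]
  have hbdd : BddBelow {t : ℝ | ∃ x : EuclideanSpace ℝ (Fin m), ‖x‖ = 1 ∧
      t = ‖Matrix.toEuclideanLin B x‖} := ⟨0, by rintro t ⟨x, -, rfl⟩; positivity⟩
  have hmu : ∀ j, minSingularValue B ≤ lam j := fun j => csInf_le hbdd (hmem j)
  have hcomp : Matrix.toEuclideanLin B
      = (Matrix.toEuclideanLin A).comp (Matrix.toEuclideanLin Aᵀ) := by
    simp [hBdef, Matrix.toEuclideanLin_eq_toLin, Matrix.toLin_mul _ (PiLp.basisFun 2 ℝ (Fin k)) _]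
  have hnorm : ‖Matrix.toEuclideanLin Aᵀ r‖ ^ 2 = ⟪r, Matrix.toEuclideanLin B r⟫ := by
    rw [← real_inner_self_eq_norm_sq]
    rw [inner_toEuclideanLin_transpose, hcomp]; rfl
  have hexp : ⟪r, Matrix.toEuclideanLin B r⟫ = ∑ j, lam j * ⟪v j, r⟫ ^ 2 := by
    rw [← v.sum_inner_mul_inner r (Matrix.toEuclideanLin B r)]
    refine Finset.sum_congr rfl fun j _ => ?_
    have h1 : ⟪v j, Matrix.toEuclideanLin B r⟫ = lam j * ⟪v j, r⟫ := by
      have hsym : ⟪v j, Matrix.toEuclideanLin B r⟫ = ⟪Matrix.toEuclideanLin Bᵀ (v j), r⟫ := by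
        rw [inner_toEuclideanLin_transpose]
      have hBt : Bᵀ = B := by
        rw [hBdef, Matrix.transpose_mul, Matrix.transpose_transpose]
      rw [hsym, hBt, hBv j, real_inner_smul_left]
    rw [h1, real_inner_comm r (v j)]; ring
  have hnr : ‖r‖ ^ 2 = ∑ j, ⟪v j, r⟫ ^ 2 := by
    rw [← real_inner_self_eq_norm_sq, ← v.sum_inner_mul_inner r r]
    refine Finset.sum_congr rfl fun j _ => ?_
    rw [real_inner_comm r (v j)]; ring
  rw [hnorm, hexp, hnr, Finset.mul_sum]
  exact Finset.sum_le_sum fun j _ => by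
    have := hmu j; nlinarith [sq_nonneg (inner ℝ (v j) r)]

/-- Gradient blocks of the consensus augmented Lagrangian after a full
ADMM update: if `∇F_i(p_i) = −A_iᵀν_i` for all `i` and `∇G(q) = ∑_i [ν_i + c(A_i p_i − q)]`,
then `∇_{p_i} L_c = cA_iᵀ(A_i p_i − q)`, `∇_{ν_i} L_c = A_i p_i − q`, `∇_q L_c = 0`, and
consequently `‖∇L_c‖² ≥ ∑_i (c² μ_{A_iA_iᵀ} + 1)‖A_i p_i − q‖²` (the squared norm of the
full gradient being the sum of the squared norms of its blocks). -/
theorem statement14 {V m : ℕ} {n : Fin V → ℕ} (c : ℝ) (hc : 0 < c)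
    (A : (i : Fin V) → Matrix (Fin m) (Fin (n i)) ℝ)
    (F : (i : Fin V) → EuclideanSpace ℝ (Fin (n i)) → ℝ)
    (hFdiff : ∀ i, Differentiable ℝ (F i))
    (G : EuclideanSpace ℝ (Fin m) → ℝ) (hGdiff : Differentiable ℝ G)
    (Lc : ((i : Fin V) → EuclideanSpace ℝ (Fin (n i))) →
      (Fin V → EuclideanSpace ℝ (Fin m)) → EuclideanSpace ℝ (Fin m) → ℝ)
    (hLc : ∀ p ν q, Lc p ν q =
      (∑ i, (F i (p i) + ⟪ν i, Matrix.toEuclideanLin (A i) (p i) - q⟫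
        + c / 2 * ‖Matrix.toEuclideanLin (A i) (p i) - q‖ ^ 2)) + G q)
    (p : (i : Fin V) → EuclideanSpace ℝ (Fin (n i)))
    (ν : Fin V → EuclideanSpace ℝ (Fin m)) (q : EuclideanSpace ℝ (Fin m))
    (h1 : ∀ i, gradient (F i) (p i) = -(Matrix.toEuclideanLin (A i)ᵀ (ν i)))
    (h2 : gradient G q = ∑ i, (ν i + c • (Matrix.toEuclideanLin (A i) (p i) - q))) :
    (∀ i, gradient (fun x => Lc (Function.update p i x) ν q) (p i)
        = c • Matrix.toEuclideanLin (A i)ᵀ (Matrix.toEuclideanLin (A i) (p i) - q))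
    ∧ (∀ i, gradient (fun x => Lc p (Function.update ν i x) q) (ν i)
        = Matrix.toEuclideanLin (A i) (p i) - q)
    ∧ gradient (fun x => Lc p ν x) q = 0
    ∧ (∑ i, ‖gradient (fun x => Lc (Function.update p i x) ν q) (p i)‖ ^ 2)
        + (∑ i, ‖gradient (fun x => Lc p (Function.update ν i x) q) (ν i)‖ ^ 2)
        + ‖gradient (fun x => Lc p ν x) q‖ ^ 2
      ≥ ∑ i, (c ^ 2 * minSingularValue (A i * (A i)ᵀ) + 1)
          * ‖Matrix.toEuclideanLin (A i) (p i) - q‖ ^ 2 := by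
  -- notation
  set r : (i : Fin V) → EuclideanSpace ℝ (Fin m) :=
    fun i => Matrix.toEuclideanLin (A i) (p i) - q with hr
  -- p blocks
  have hpgrad : ∀ i, gradient (fun x => Lc (Function.update p i x) ν q) (p i)
      = c • Matrix.toEuclideanLin (A i)ᵀ (r i) := by
    intro i
    set T : EuclideanSpace ℝ (Fin (n i)) →L[ℝ] EuclideanSpace ℝ (Fin m) :=
      LinearMap.toContinuousLinearMap (Matrix.toEuclideanLin (A i)) with hT
    have hTx : ∀ x, T x = Matrix.toEuclideanLin (A i) x := fun x => rfl
    set Ci : ℝ := (∑ j ∈ Finset.univ.erase i,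
      (F j (p j) + ⟪ν j, Matrix.toEuclideanLin (A j) (p j) - q⟫
        + c / 2 * ‖Matrix.toEuclideanLin (A j) (p j) - q‖ ^ 2)) + G q with hCi
    have hfun : (fun x => Lc (Function.update p i x) ν q)
        = fun x => (F i x + ((fun u => ⟪ν i, u⟫ + c / 2 * ‖u‖ ^ 2) (T x - q))) + Ci := by
      funext x
      rw [hLc, ← Finset.add_sum_erase _ _ (Finset.mem_univ i)]
      have hsum : ∑ j ∈ Finset.univ.erase i,
          (F j (Function.update p i x j)
            + ⟪ν j, Matrix.toEuclideanLin (A j) (Function.update p i x j) - q⟫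
            + c / 2 * ‖Matrix.toEuclideanLin (A j) (Function.update p i x j) - q‖ ^ 2)
          = ∑ j ∈ Finset.univ.erase i,
          (F j (p j) + ⟪ν j, Matrix.toEuclideanLin (A j) (p j) - q⟫
            + c / 2 * ‖Matrix.toEuclideanLin (A j) (p j) - q‖ ^ 2) := by
        refine Finset.sum_congr rfl fun j hj => ?_
        rw [Function.update_of_ne (Finset.ne_of_mem_erase hj)]
      rw [hsum, Function.update_self, hCi, hTx]
      ring
    rw [hfun]
    have hFi : HasGradientAt (F i) (-(Matrix.toEuclideanLin (A i)ᵀ (ν i))) (p i) := by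
      rw [← h1 i]; exact (hFdiff i (p i)).hasGradientAt
    have hphi : HasGradientAt (fun u => ⟪ν i, u⟫ + c / 2 * ‖u‖ ^ 2)
        (ν i + c • (T (p i) - q)) (T (p i) - q) := hga_phi _ c _
    have hcomp : HasGradientAt (fun x => (fun u => ⟪ν i, u⟫ + c / 2 * ‖u‖ ^ 2) (T x - q))
        (Matrix.toEuclideanLin (A i)ᵀ (ν i + c • (T (p i) - q))) (p i) := by
      refine hga_comp_affine T q _ (fun y => inner_toEuclideanLin_transpose (A i) _ y) hphi
    have htot := hga_add (hga_add hFi hcomp) (hasGradientAt_const (p i) Ci)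
    rw [htot.gradient]
    rw [hTx, map_add, _root_.map_smul]
    abel
  -- ν blocks
  have hnugrad : ∀ i, gradient (fun x => Lc p (Function.update ν i x) q) (ν i) = r i := by
    intro i
    set Ci : ℝ := (F i (p i) + c / 2 * ‖r i‖ ^ 2) + ((∑ j ∈ Finset.univ.erase i,
      (F j (p j) + ⟪ν j, Matrix.toEuclideanLin (A j) (p j) - q⟫
        + c / 2 * ‖Matrix.toEuclideanLin (A j) (p j) - q‖ ^ 2)) + G q) with hCi
    have hfun : (fun x => Lc p (Function.update ν i x) q)
        = fun x => ⟪x, r i⟫ + Ci := by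
      funext x
      rw [hLc, ← Finset.add_sum_erase _ _ (Finset.mem_univ i)]
      have hsum : ∑ j ∈ Finset.univ.erase i,
          (F j (p j) + ⟪Function.update ν i x j, Matrix.toEuclideanLin (A j) (p j) - q⟫
            + c / 2 * ‖Matrix.toEuclideanLin (A j) (p j) - q‖ ^ 2)
          = ∑ j ∈ Finset.univ.erase i,
          (F j (p j) + ⟪ν j, Matrix.toEuclideanLin (A j) (p j) - q⟫
            + c / 2 * ‖Matrix.toEuclideanLin (A j) (p j) - q‖ ^ 2) := by
        refine Finset.sum_congr rfl fun j hj => ?_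
        rw [Function.update_of_ne (Finset.ne_of_mem_erase hj)]
      rw [hsum, Function.update_self, hCi, hr]
      ring
    rw [hfun]
    have h := hga_add (hga_inner_left (r i) (ν i)) (hasGradientAt_const (ν i) Ci)
    rw [h.gradient, add_zero]
  -- q block
  have hqgrad : gradient (fun x => Lc p ν x) q = 0 := by
    have hfun : (fun x => Lc p ν x)
        = fun x => (∑ j, (F j (p j)
            + ((fun u => ⟪ν j, u⟫ + c / 2 * ‖u‖ ^ 2)
              ((-(ContinuousLinearMap.id ℝ (EuclideanSpace ℝ (Fin m)))) x
                - (-(Matrix.toEuclideanLin (A j) (p j))))))) + G x := by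
      funext x
      rw [hLc]
      congr 1
      refine Finset.sum_congr rfl fun j _ => ?_
      have : (-(ContinuousLinearMap.id ℝ (EuclideanSpace ℝ (Fin m)))) x
          - (-(Matrix.toEuclideanLin (A j) (p j)))
          = Matrix.toEuclideanLin (A j) (p j) - x := by
        simp; abel
      rw [this]; ring
    rw [hfun]
    have hterm : ∀ j : Fin V, j ∈ Finset.univ → HasGradientAt (fun x => (F j (p j)
        + ((fun u => ⟪ν j, u⟫ + c / 2 * ‖u‖ ^ 2)
          ((-(ContinuousLinearMap.id ℝ (EuclideanSpace ℝ (Fin m)))) x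
            - (-(Matrix.toEuclideanLin (A j) (p j)))))))
        (-(ν j + c • (r j))) q := by
      intro j _
      have hpt : (-(ContinuousLinearMap.id ℝ (EuclideanSpace ℝ (Fin m)))) q
          - (-(Matrix.toEuclideanLin (A j) (p j))) = r j := by
        simp [hr]; abel
      have hphi : HasGradientAt (fun u => ⟪ν j, u⟫ + c / 2 * ‖u‖ ^ 2)
          (ν j + c • (r j))
          ((-(ContinuousLinearMap.id ℝ (EuclideanSpace ℝ (Fin m)))) q
            - (-(Matrix.toEuclideanLin (A j) (p j)))) := by
        rw [hpt]; exact hga_phi _ c _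
      have hcomp := hga_comp_affine (-(ContinuousLinearMap.id ℝ (EuclideanSpace ℝ (Fin m))))
        (-(Matrix.toEuclideanLin (A j) (p j))) (-(ν j + c • (r j)))
        (fun y => by
          rw [show ((-(ContinuousLinearMap.id ℝ (EuclideanSpace ℝ (Fin m)))) y) = -y from rfl,
            inner_neg_left, inner_neg_right]) hphi
      have h := hga_add (hasGradientAt_const q (F j (p j))) hcomp
      rwa [zero_add] at h
    have hsum := hga_sum Finset.univ hterm
    have hrdef : ∀ j, Matrix.toEuclideanLin (A j) (p j) - q = r j := fun _ => rfl
    have hG := (hGdiff q).hasGradientAt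
    rw [h2] at hG
    simp only [hrdef] at hG
    have htot := hga_add hsum hG
    rw [htot.gradient, ← Finset.sum_add_distrib]
    exact Finset.sum_eq_zero fun j _ => by abel
  refine ⟨hpgrad, hnugrad, hqgrad, ?_⟩
  rw [hqgrad]
  simp only [norm_zero]
  have hle : ∀ i : Fin V, (c ^ 2 * minSingularValue (A i * (A i)ᵀ) + 1) * ‖r i‖ ^ 2
      ≤ ‖gradient (fun x => Lc (Function.update p i x) ν q) (p i)‖ ^ 2
        + ‖gradient (fun x => Lc p (Function.update ν i x) q) (ν i)‖ ^ 2 := by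
    intro i
    rw [hpgrad i, hnugrad i]
    have h1' : ‖c • Matrix.toEuclideanLin (A i)ᵀ (r i)‖ ^ 2
        = c ^ 2 * ‖Matrix.toEuclideanLin (A i)ᵀ (r i)‖ ^ 2 := by
      rw [norm_smul, mul_pow, Real.norm_eq_abs, sq_abs]
    rw [h1']
    have h2' := key_sv (A i) (r i)
    nlinarith [sq_nonneg c]
  calc ∑ i, (c ^ 2 * minSingularValue (A i * (A i)ᵀ) + 1)
          * ‖Matrix.toEuclideanLin (A i) (p i) - q‖ ^ 2
      ≤ ∑ i, (‖gradient (fun x => Lc (Function.update p i x) ν q) (p i)‖ ^ 2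
          + ‖gradient (fun x => Lc p (Function.update ν i x) q) (ν i)‖ ^ 2) :=
        Finset.sum_le_sum fun i _ => hle i
    _ = (∑ i, ‖gradient (fun x => Lc (Function.update p i x) ν q) (p i)‖ ^ 2)
          + (∑ i, ‖gradient (fun x => Lc p (Function.update ν i x) q) (ν i)‖ ^ 2) :=
        Finset.sum_add_distrib
    _ ≤ _ := by simp
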